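/- If R₁ : 𝒳 → 𝒴 (with 𝒴 countable) is a deletion ε₁-LDP randomizer and R₂ : 𝒴 → 𝒵 is an ε₂-LDP randomizer, then the composition R₂ ∘ R₁ is a deletion ε-LDP randomizer, where ε = ln((e^{ε₁+ε₂} + 1)/(e^{ε₁} + e^{ε₂})). -/
import Mathlib


open scoped ENNReal

/-- Probability that a sample from the PMF `p` lands in the set `S` (as a real number). -/
noncomputable def pr {Y : Type*} (p : PMF Y) (S : Set Y) : ℝ :=
  (p.toOuterMeasure S).toReal

/-- The local randomizer `R` satisfies `ε`-local differential privacy. -/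
def IsPureLDP {X Y : Type*} (R : X → PMF Y) (ε : ℝ) : Prop :=
  ∀ x x' : X, ∀ S : Set Y, pr (R x) S ≤ Real.exp ε * pr (R x') S

/-- `R` is a deletion `ε`-LDP randomizer: there is a reference distribution `R₀` such
that `e^{-ε} Pr[R₀ ∈ S] ≤ Pr[R(x) ∈ S] ≤ e^ε Pr[R₀ ∈ S]` for all `x` and `S`. -/
def IsPureDeletionLDP {X Y : Type*} (R : X → PMF Y) (ε : ℝ) : Prop :=
  ∃ R₀ : PMF Y, ∀ x : X, ∀ S : Set Y,
    Real.exp (-ε) * pr R₀ S ≤ pr (R x) S ∧ pr (R x) S ≤ Real.exp ε * pr R₀ S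

/-- Key pointwise inequality: bilinear in `(p, q)` over the box
`P/E1 ≤ p ≤ E1·P`, `m ≤ q ≤ E2·m`. -/
lemma comp_key (E1 E2 p P q m : ℝ) (hE1 : 1 ≤ E1) (hE2 : 1 ≤ E2)
    (hP : 0 ≤ P) (hm : 0 ≤ m)
    (h1 : P ≤ E1 * p) (h2 : p ≤ E1 * P) (h3 : m ≤ q) (h4 : q ≤ E2 * m) :
    (E1 + E2) * (p * q) - (E1 * E2 + 1) * (P * q) ≤ E2 * (E1 + 1) * m * (p - P) := by
  nlinarith [mul_nonneg (sub_nonneg.2 h2) (sub_nonneg.2 h3),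
    mul_nonneg (sub_nonneg.2 h1) (sub_nonneg.2 h4),
    mul_nonneg (sub_nonneg.2 h2) (sub_nonneg.2 h4),
    mul_nonneg (sub_nonneg.2 h1) (sub_nonneg.2 h3),
    mul_nonneg (mul_nonneg (sub_nonneg.2 hE2) hm) (sub_nonneg.2 h2),
    mul_nonneg (mul_nonneg (sub_nonneg.2 hE2) hm) (sub_nonneg.2 h1),
    mul_nonneg hP hm, mul_nonneg hP (sub_nonneg.2 h3)]

/-- Summed version of the key inequality. -/
lemma comp_sum {Y : Type*} (E1 E2 m : ℝ) (hE1 : 1 ≤ E1) (hE2 : 1 ≤ E2) (hm : 0 ≤ m)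
    (px p0 q : Y → ℝ) (hp0 : ∀ y, 0 ≤ p0 y)
    (hb1 : ∀ y, p0 y ≤ E1 * px y) (hb2 : ∀ y, px y ≤ E1 * p0 y)
    (hq1 : ∀ y, m ≤ q y) (hq2 : ∀ y, q y ≤ E2 * m)
    (hsx : Summable px) (hs0 : Summable p0)
    (hSx : ∑' y, px y = 1) (hS0 : ∑' y, p0 y = 1) :
    (E1 + E2) * ∑' y, px y * q y ≤ (E1 * E2 + 1) * ∑' y, p0 y * q y := by
  have hE1' : (0:ℝ) < E1 := lt_of_lt_of_le one_pos hE1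
  have hpx : ∀ y, 0 ≤ px y := fun y =>
    nonneg_of_mul_nonneg_right (le_trans (hp0 y) (hb1 y)) hE1'
  have hq0 : ∀ y, 0 ≤ q y := fun y => le_trans hm (hq1 y)
  have hsxq : Summable (fun y => px y * q y) := by
    refine Summable.of_nonneg_of_le (fun y => mul_nonneg (hpx y) (hq0 y))
      (fun y => ?_) (hsx.mul_right (E2 * m))
    exact mul_le_mul_of_nonneg_left (hq2 y) (hpx y)
  have hs0q : Summable (fun y => p0 y * q y) := by
    refine Summable.of_nonneg_of_le (fun y => mul_nonneg (hp0 y) (hq0 y))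
      (fun y => ?_) (hs0.mul_right (E2 * m))
    exact mul_le_mul_of_nonneg_left (hq2 y) (hp0 y)
  have key : (0:ℝ) ≤ ∑' y, (E2 * (E1 + 1) * m * (px y - p0 y)
      - ((E1 + E2) * (px y * q y) - (E1 * E2 + 1) * (p0 y * q y))) := by
    refine tsum_nonneg fun y => ?_
    have := comp_key E1 E2 (px y) (p0 y) (q y) m hE1 hE2 (hp0 y) hm (hb1 y) (hb2 y)
      (hq1 y) (hq2 y)
    linarith
  have heq : ∑' y, (E2 * (E1 + 1) * m * (px y - p0 y)
      - ((E1 + E2) * (px y * q y) - (E1 * E2 + 1) * (p0 y * q y)))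
      = E2 * (E1 + 1) * m * ((∑' y, px y) - ∑' y, p0 y)
        - ((E1 + E2) * (∑' y, px y * q y) - (E1 * E2 + 1) * ∑' y, p0 y * q y) := by
    rw [Summable.tsum_sub (((hsx.sub hs0).mul_left _)) ((hsxq.mul_left _).sub (hs0q.mul_left _)),
      Summable.tsum_sub (hsxq.mul_left _) (hs0q.mul_left _), tsum_mul_left, tsum_mul_left,
      tsum_mul_left, Summable.tsum_sub hsx hs0]
  rw [heq, hSx, hS0] at key
  linarith

/-- Composition preserves deletion LDP: if `R₁ : 𝒳 → 𝒴` (with `𝒴` countable) is a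
deletion `ε₁`-LDP randomizer and `R₂ : 𝒴 → 𝒵` is an `ε₂`-LDP randomizer, then the
composition `R₂ ∘ R₁` (i.e. `x ↦ (R₁ x).bind R₂`) is a deletion `ε`-LDP randomizer, for
`ε = ln((e^{ε₁+ε₂} + 1)/(e^{ε₁} + e^{ε₂}))`. -/
theorem composition_of_deletion_ldp_randomizers {X Y Z : Type*} [Countable Y]
    (ε₁ ε₂ : ℝ) (hε₁ : 0 ≤ ε₁) (hε₂ : 0 ≤ ε₂)
    (R₁ : X → PMF Y) (R₂ : Y → PMF Z)
    (h₁ : IsPureDeletionLDP R₁ ε₁) (h₂ : IsPureLDP R₂ ε₂) :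
    IsPureDeletionLDP (fun x => (R₁ x).bind R₂)
      (Real.log ((Real.exp (ε₁ + ε₂) + 1) / (Real.exp ε₁ + Real.exp ε₂))) := by
  obtain ⟨R₀, hR₀⟩ := h₁
  have hNE : Nonempty Y := ⟨R₀.support_nonempty.choose⟩
  set E1 := Real.exp ε₁ with hE1def
  set E2 := Real.exp ε₂ with hE2def
  have hE1 : 1 ≤ E1 := Real.one_le_exp hε₁
  have hE2 : 1 ≤ E2 := Real.one_le_exp hε₂
  have hE1' : (0:ℝ) < E1 := lt_of_lt_of_le one_pos hE1
  have hE2' : (0:ℝ) < E2 := lt_of_lt_of_le one_pos hE2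
  have hE12 : Real.exp (ε₁ + ε₂) = E1 * E2 := Real.exp_add ε₁ ε₂
  set K : ℝ := (E1 * E2 + 1) / (E1 + E2) with hKdef
  have hKpos : 0 < K := by positivity
  have hexpK : Real.exp (Real.log ((Real.exp (ε₁ + ε₂) + 1) / (E1 + E2))) = K := by
    rw [hE12]; exact Real.exp_log hKpos
  -- probability of S under R₂ y, plus its basic bounds
  refine ⟨R₀.bind R₂, fun x S => ?_⟩
  set q : Y → ℝ := fun y => pr (R₂ y) S with hqdef
  have hq0 : ∀ y, 0 ≤ q y := fun y => ENNReal.toReal_nonneg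
  have hbdd : BddBelow (Set.range q) := ⟨0, by rintro r ⟨y, rfl⟩; exact hq0 y⟩
  set m : ℝ := ⨅ y, q y with hmdef
  have hm : 0 ≤ m := le_ciInf hq0
  have hq1 : ∀ y, m ≤ q y := fun y => ciInf_le hbdd y
  have hq2 : ∀ y, q y ≤ E2 * m := by
    intro y
    have hdm : q y / E2 ≤ m := by
      refine le_ciInf fun y' => ?_
      rw [div_le_iff₀ hE2']
      calc q y ≤ E2 * q y' := h₂ y y' S
        _ = q y' * E2 := mul_comm _ _
    calc q y = E2 * (q y / E2) := by field_simp
      _ ≤ E2 * m := mul_le_mul_of_nonneg_left hdm (le_of_lt hE2')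
  -- pointwise densities
  set px : Y → ℝ := fun y => ((R₁ x) y).toReal with hpxdef
  set p0 : Y → ℝ := fun y => (R₀ y).toReal with hp0def
  have hp00 : ∀ y, 0 ≤ p0 y := fun y => ENNReal.toReal_nonneg
  have hpx0 : ∀ y, 0 ≤ px y := fun y => ENNReal.toReal_nonneg
  have hpt : ∀ y, Real.exp (-ε₁) * p0 y ≤ px y ∧ px y ≤ E1 * p0 y := by
    intro y
    have h := hR₀ x {y}
    simpa [pr, PMF.toOuterMeasure_apply_singleton, hpxdef, hp0def] using h
  have hb2 : ∀ y, px y ≤ E1 * p0 y := fun y => (hpt y).2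
  have hb1 : ∀ y, p0 y ≤ E1 * px y := by
    intro y
    have h := (hpt y).1
    have h' : E1 * (Real.exp (-ε₁) * p0 y) ≤ E1 * px y :=
      mul_le_mul_of_nonneg_left h (le_of_lt hE1')
    calc p0 y = E1 * (Real.exp (-ε₁) * p0 y) := by
          rw [← mul_assoc, hE1def, ← Real.exp_add]; simp
      _ ≤ E1 * px y := h'
  -- summability and total mass
  have hfin : ∀ (p : PMF Y), ∑' y, p y ≠ ∞ := fun p => by
    rw [p.tsum_coe]; exact ENNReal.one_ne_top
  have hsx : Summable px := ENNReal.summable_toReal (hfin (R₁ x))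
  have hs0 : Summable p0 := ENNReal.summable_toReal (hfin R₀)
  have hSx : ∑' y, px y = 1 := by
    rw [hpxdef, ← ENNReal.tsum_toReal_eq (fun y => (R₁ x).apply_ne_top y), (R₁ x).tsum_coe,
      ENNReal.toReal_one]
  have hS0 : ∑' y, p0 y = 1 := by
    rw [hp0def, ← ENNReal.tsum_toReal_eq (fun y => R₀.apply_ne_top y), R₀.tsum_coe,
      ENNReal.toReal_one]
  -- express the probabilities of the binds as real sums
  have hOMle : ∀ y : Y, (R₂ y).toOuterMeasure S ≤ 1 := by
    intro y
    rw [PMF.toOuterMeasure_apply]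
    calc ∑' z, S.indicator (R₂ y) z ≤ ∑' z, (R₂ y) z :=
          ENNReal.tsum_le_tsum fun z => Set.indicator_le_self _ _ z
      _ = 1 := (R₂ y).tsum_coe
  have hOMne : ∀ y : Y, (R₂ y).toOuterMeasure S ≠ ∞ := fun y =>
    ne_top_of_le_ne_top ENNReal.one_ne_top (hOMle y)
  have hpr : ∀ (p : PMF Y), pr (p.bind R₂) S = ∑' y, (p y).toReal * q y := by
    intro p
    show ((p.bind R₂).toOuterMeasure S).toReal = _
    rw [PMF.toOuterMeasure_bind_apply,
      ENNReal.tsum_toReal_eq (fun y => ENNReal.mul_ne_top (p.apply_ne_top y) (hOMne y))]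
    exact tsum_congr fun y => ENNReal.toReal_mul
  have hA : pr ((R₁ x).bind R₂) S = ∑' y, px y * q y := hpr (R₁ x)
  have hB : pr (R₀.bind R₂) S = ∑' y, p0 y * q y := hpr R₀
  set A : ℝ := ∑' y, px y * q y with hAdef
  set B : ℝ := ∑' y, p0 y * q y with hBdef
  have hAB : (E1 + E2) * A ≤ (E1 * E2 + 1) * B :=
    comp_sum E1 E2 m hE1 hE2 hm px p0 q hp00 hb1 hb2 hq1 hq2 hsx hs0 hSx hS0
  have hBA : (E1 + E2) * B ≤ (E1 * E2 + 1) * A :=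
    comp_sum E1 E2 m hE1 hE2 hm p0 px q hpx0 hb2 hb1 hq1 hq2 hs0 hsx hS0 hSx
  have hE12pos : (0:ℝ) < E1 + E2 := by linarith
  constructor
  · -- lower bound: exp(-ε) * B ≤ A
    simp only [hA, hB]
    rw [Real.exp_neg, hexpK]
    rw [inv_mul_eq_div, div_le_iff₀ hKpos]
    have hBKA : B ≤ K * A := by
      rw [hKdef, div_mul_eq_mul_div, le_div_iff₀ hE12pos]
      calc B * (E1 + E2) = (E1 + E2) * B := mul_comm _ _
        _ ≤ (E1 * E2 + 1) * A := hBA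
    calc B ≤ K * A := hBKA
      _ = A * K := mul_comm _ _
  · -- upper bound: A ≤ exp(ε) * B
    simp only [hA, hB]
    rw [hexpK]
    rw [hKdef, div_mul_eq_mul_div, le_div_iff₀ hE12pos]
    calc A * (E1 + E2) = (E1 + E2) * A := mul_comm _ _
      _ ≤ (E1 * E2 + 1) * B := hAB
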